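/- Let G be a (K_3, K_{1,3}+3P_1)-free graph containing a vertex x. Let A and B be disjoint independent subsets of V(G) \ N[x], each of size at least 9, such that some vertex x_1 ∈ N(x) is complete to A and anticomplete to B. Then there exist vertices a ∈ A and b ∈ B such that every vertex of A \ {a} is adjacent to all but at most one vertex of B \ {b} and vice versa; in particular G[(A\{a}) ∪ (B\{b})] is a complete bipartite graph minus a matching. -/

import Mathlib

/-- K_{1,3} + 3P₁: a claw (0 adjacent to 1, 2, 3) plus three isolated vertices. -/
def K13plus3P1 : SimpleGraph (Fin 7) :=
  SimpleGraph.fromRel (fun a b => (a.val, b.val) ∈ [(0,1),(0,2),(0,3)])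

instance : DecidableRel K13plus3P1.Adj := fun a b =>
  decidable_of_iff (a ≠ b ∧ (((a.val,b.val) ∈ [(0,1),(0,2),(0,3)]) ∨ ((b.val,a.val) ∈ [(0,1),(0,2),(0,3)])))
    (by rw [K13plus3P1, SimpleGraph.fromRel_adj])

set_option maxHeartbeats 2000000 in
lemma claw_embed {V : Type*} (G : SimpleGraph V)
    (c l1 l2 l3 i1 i2 i3 : V)
    (a1 : G.Adj c l1)
    (a2 : G.Adj c l2)
    (a3 : G.Adj c l3)
    (nl12 : ¬G.Adj l1 l2)
    (nl13 : ¬G.Adj l1 l3)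
    (nl23 : ¬G.Adj l2 l3)
    (nc1 : ¬G.Adj c i1)
    (nc2 : ¬G.Adj c i2)
    (nc3 : ¬G.Adj c i3)
    (n11 : ¬G.Adj l1 i1)
    (n12 : ¬G.Adj l1 i2)
    (n13 : ¬G.Adj l1 i3)
    (n21 : ¬G.Adj l2 i1)
    (n22 : ¬G.Adj l2 i2)
    (n23 : ¬G.Adj l2 i3)
    (n31 : ¬G.Adj l3 i1)
    (n32 : ¬G.Adj l3 i2)
    (n33 : ¬G.Adj l3 i3)
    (ni12 : ¬G.Adj i1 i2)
    (ni13 : ¬G.Adj i1 i3)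
    (ni23 : ¬G.Adj i2 i3)
    (dl12 : l1 ≠ l2)
    (dl13 : l1 ≠ l3)
    (dl23 : l2 ≠ l3)
    (dc1 : c ≠ i1)
    (dc2 : c ≠ i2)
    (dc3 : c ≠ i3)
    (d11 : l1 ≠ i1)
    (d12 : l1 ≠ i2)
    (d13 : l1 ≠ i3)
    (d21 : l2 ≠ i1)
    (d22 : l2 ≠ i2)
    (d23 : l2 ≠ i3)
    (d31 : l3 ≠ i1)
    (d32 : l3 ≠ i2)
    (d33 : l3 ≠ i3)
    (di12 : i1 ≠ i2)
    (di13 : i1 ≠ i3)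
    (di23 : i2 ≠ i3)
    : Nonempty (K13plus3P1 ↪g G) := by
  have dcl1 : c ≠ l1 := a1.ne
  have dcl2 : c ≠ l2 := a2.ne
  have dcl3 : c ≠ l3 := a3.ne
  refine ⟨⟨⟨![c,l1,l2,l3,i1,i2,i3], ?_⟩, @fun a b => ?_⟩⟩
  · intro a b h
    fin_cases a <;> fin_cases b <;>
      first
        | rfl
        | exact absurd h dl12
        | exact absurd h.symm dl12
        | exact absurd h dl13
        | exact absurd h.symm dl13
        | exact absurd h dl23
        | exact absurd h.symm dl23
        | exact absurd h dc1
        | exact absurd h.symm dc1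
        | exact absurd h dc2
        | exact absurd h.symm dc2
        | exact absurd h dc3
        | exact absurd h.symm dc3
        | exact absurd h d11
        | exact absurd h.symm d11
        | exact absurd h d12
        | exact absurd h.symm d12
        | exact absurd h d13
        | exact absurd h.symm d13
        | exact absurd h d21
        | exact absurd h.symm d21
        | exact absurd h d22
        | exact absurd h.symm d22
        | exact absurd h d23
        | exact absurd h.symm d23
        | exact absurd h d31
        | exact absurd h.symm d31
        | exact absurd h d32
        | exact absurd h.symm d32
        | exact absurd h d33
        | exact absurd h.symm d33
        | exact absurd h di12
        | exact absurd h.symm di12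
        | exact absurd h di13
        | exact absurd h.symm di13
        | exact absurd h di23
        | exact absurd h.symm di23
        | exact absurd h dcl1
        | exact absurd h.symm dcl1
        | exact absurd h dcl2
        | exact absurd h.symm dcl2
        | exact absurd h dcl3
        | exact absurd h.symm dcl3
  · fin_cases a <;> fin_cases b <;>
      first
        | exact iff_of_false G.irrefl (by decide)
        | exact iff_of_true a1 (by decide)
        | exact iff_of_true a1.symm (by decide)
        | exact iff_of_true a2 (by decide)
        | exact iff_of_true a2.symm (by decide)
        | exact iff_of_true a3 (by decide)
        | exact iff_of_true a3.symm (by decide)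
        | exact iff_of_false nl12 (by decide)
        | exact iff_of_false (fun hh => nl12 hh.symm) (by decide)
        | exact iff_of_false nl13 (by decide)
        | exact iff_of_false (fun hh => nl13 hh.symm) (by decide)
        | exact iff_of_false nl23 (by decide)
        | exact iff_of_false (fun hh => nl23 hh.symm) (by decide)
        | exact iff_of_false nc1 (by decide)
        | exact iff_of_false (fun hh => nc1 hh.symm) (by decide)
        | exact iff_of_false nc2 (by decide)
        | exact iff_of_false (fun hh => nc2 hh.symm) (by decide)
        | exact iff_of_false nc3 (by decide)
        | exact iff_of_false (fun hh => nc3 hh.symm) (by decide)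
        | exact iff_of_false n11 (by decide)
        | exact iff_of_false (fun hh => n11 hh.symm) (by decide)
        | exact iff_of_false n12 (by decide)
        | exact iff_of_false (fun hh => n12 hh.symm) (by decide)
        | exact iff_of_false n13 (by decide)
        | exact iff_of_false (fun hh => n13 hh.symm) (by decide)
        | exact iff_of_false n21 (by decide)
        | exact iff_of_false (fun hh => n21 hh.symm) (by decide)
        | exact iff_of_false n22 (by decide)
        | exact iff_of_false (fun hh => n22 hh.symm) (by decide)
        | exact iff_of_false n23 (by decide)
        | exact iff_of_false (fun hh => n23 hh.symm) (by decide)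
        | exact iff_of_false n31 (by decide)
        | exact iff_of_false (fun hh => n31 hh.symm) (by decide)
        | exact iff_of_false n32 (by decide)
        | exact iff_of_false (fun hh => n32 hh.symm) (by decide)
        | exact iff_of_false n33 (by decide)
        | exact iff_of_false (fun hh => n33 hh.symm) (by decide)
        | exact iff_of_false ni12 (by decide)
        | exact iff_of_false (fun hh => ni12 hh.symm) (by decide)
        | exact iff_of_false ni13 (by decide)
        | exact iff_of_false (fun hh => ni13 hh.symm) (by decide)
        | exact iff_of_false ni23 (by decide)
        | exact iff_of_false (fun hh => ni23 hh.symm) (by decide)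

lemma two_of_encard {V : Type*} {s : Set V} (h : 1 < s.encard) :
    ∃ a ∈ s, ∃ b ∈ s, a ≠ b := by
  obtain ⟨a, b, ha, hb, hab⟩ := Set.one_lt_encard_iff.mp h
  exact ⟨a, ha, b, hb, hab⟩

lemma three_of_encard {V : Type*} {s : Set V} (h : 2 < s.encard) :
    ∃ a ∈ s, ∃ b ∈ s, ∃ c ∈ s, a ≠ b ∧ a ≠ c ∧ b ≠ c := by
  have hne : s.Nonempty := by
    rw [← Set.encard_pos]
    exact lt_trans (by norm_num) h
  obtain ⟨a, ha⟩ := hne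
  have h1 : (s \ {a}).encard + 1 = s.encard := Set.encard_diff_singleton_add_one ha
  have h2 : 1 < (s \ {a}).encard := by
    by_contra hcon
    push_neg at hcon
    have : s.encard ≤ 2 := by
      rw [← h1]
      calc (s \ {a}).encard + 1 ≤ 1 + 1 := add_le_add_left hcon 1
        _ = 2 := by norm_num
    exact absurd h (not_lt.mpr this)
  obtain ⟨b, c, hb, hc, hbc⟩ := Set.one_lt_encard_iff.mp h2
  exact ⟨a, ha, b, hb.1, c, hc.1, fun e => hb.2 e.symm, fun e => hc.2 e.symm, hbc⟩

theorem statement_12 {V : Type*} (G : SimpleGraph V) (htri : G.CliqueFree 3)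
    (hfree : IsEmpty (K13plus3P1 ↪g G)) (x : V) (A B : Set V)
    (hA : ∀ a ∈ A, a ≠ x ∧ ¬ G.Adj x a) (hB : ∀ b ∈ B, b ≠ x ∧ ¬ G.Adj x b)
    (hdisj : Disjoint A B)
    (hAind : A.Pairwise (fun u v => ¬ G.Adj u v))
    (hBind : B.Pairwise (fun u v => ¬ G.Adj u v))
    (x1 : V) (hx1 : G.Adj x x1)
    (hx1A : ∀ a ∈ A, G.Adj x1 a) (hx1B : ∀ b ∈ B, ¬ G.Adj x1 b)
    (hAcard : 9 ≤ A.encard) (hBcard : 9 ≤ B.encard) :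
    ∃ a ∈ A, ∃ b ∈ B,
      (∀ a' ∈ A \ {a}, ({b' ∈ B \ {b} | ¬ G.Adj a' b'}).encard ≤ 1) ∧
      (∀ b' ∈ B \ {b}, ({a' ∈ A \ {a} | ¬ G.Adj a' b'}).encard ≤ 1) := by
  classical
  have hAne : A.Nonempty := by
    rw [← Set.encard_pos]; exact lt_of_lt_of_le (by norm_num) hAcard
  have hBne : B.Nonempty := by
    rw [← Set.encard_pos]; exact lt_of_lt_of_le (by norm_num) hBcard
  have hAB : ∀ a ∈ A, ∀ b ∈ B, a ≠ b := fun a ha b hb => hdisj.ne_of_mem ha hb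
  -- Key lemma 1 (A side): a vertex of A with ≥2 non-neighbours in B has ≤2 neighbours in B
  have L1A : ∀ a ∈ A, 1 < ({b ∈ B | ¬ G.Adj a b}).encard →
      ({b ∈ B | G.Adj a b}).encard ≤ 2 := by
    intro a ha hnc
    by_contra hc
    push_neg at hc
    obtain ⟨b1, hb1, b2, hb2, hb12⟩ := two_of_encard hnc
    obtain ⟨b3, hb3, b4, hb4, b5, hb5, h34, h35, h45⟩ := three_of_encard hc
    obtain ⟨e⟩ := claw_embed G a b3 b4 b5 x b1 b2
      hb3.2 hb4.2 hb5.2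
      (hBind hb3.1 hb4.1 h34) (hBind hb3.1 hb5.1 h35) (hBind hb4.1 hb5.1 h45)
      (fun h => (hA a ha).2 h.symm) hb1.2 hb2.2
      (fun h => (hB b3 hb3.1).2 h.symm)
      (hBind hb3.1 hb1.1 (fun e => hb1.2 (e ▸ hb3.2)))
      (hBind hb3.1 hb2.1 (fun e => hb2.2 (e ▸ hb3.2)))
      (fun h => (hB b4 hb4.1).2 h.symm)
      (hBind hb4.1 hb1.1 (fun e => hb1.2 (e ▸ hb4.2)))
      (hBind hb4.1 hb2.1 (fun e => hb2.2 (e ▸ hb4.2)))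
      (fun h => (hB b5 hb5.1).2 h.symm)
      (hBind hb5.1 hb1.1 (fun e => hb1.2 (e ▸ hb5.2)))
      (hBind hb5.1 hb2.1 (fun e => hb2.2 (e ▸ hb5.2)))
      (hB b1 hb1.1).2 (hB b2 hb2.1).2 (hBind hb1.1 hb2.1 hb12)
      h34 h35 h45
      (hA a ha).1 (hAB a ha b1 hb1.1) (hAB a ha b2 hb2.1)
      (hB b3 hb3.1).1 (fun e => hb1.2 (e ▸ hb3.2)) (fun e => hb2.2 (e ▸ hb3.2))
      (hB b4 hb4.1).1 (fun e => hb1.2 (e ▸ hb4.2)) (fun e => hb2.2 (e ▸ hb4.2))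
      (hB b5 hb5.1).1 (fun e => hb1.2 (e ▸ hb5.2)) (fun e => hb2.2 (e ▸ hb5.2))
      (Ne.symm (hB b1 hb1.1).1) (Ne.symm (hB b2 hb2.1).1) hb12
    exact hfree.false e
  -- Key lemma 1 (B side)
  have L1B : ∀ b ∈ B, 1 < ({a ∈ A | ¬ G.Adj a b}).encard →
      ({a ∈ A | G.Adj a b}).encard ≤ 2 := by
    intro b hb hnc
    by_contra hc
    push_neg at hc
    obtain ⟨a1, hb1, a2, hb2, hb12⟩ := two_of_encard hnc
    obtain ⟨a3, hb3, a4, hb4, a5, hb5, h34, h35, h45⟩ := three_of_encard hc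
    obtain ⟨e⟩ := claw_embed G b a3 a4 a5 x a1 a2
      hb3.2.symm hb4.2.symm hb5.2.symm
      (hAind hb3.1 hb4.1 h34) (hAind hb3.1 hb5.1 h35) (hAind hb4.1 hb5.1 h45)
      (fun h => (hB b hb).2 h.symm) (fun h => hb1.2 h.symm) (fun h => hb2.2 h.symm)
      (fun h => (hA a3 hb3.1).2 h.symm)
      (hAind hb3.1 hb1.1 (fun e => hb1.2 (e ▸ hb3.2)))
      (hAind hb3.1 hb2.1 (fun e => hb2.2 (e ▸ hb3.2)))
      (fun h => (hA a4 hb4.1).2 h.symm)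
      (hAind hb4.1 hb1.1 (fun e => hb1.2 (e ▸ hb4.2)))
      (hAind hb4.1 hb2.1 (fun e => hb2.2 (e ▸ hb4.2)))
      (fun h => (hA a5 hb5.1).2 h.symm)
      (hAind hb5.1 hb1.1 (fun e => hb1.2 (e ▸ hb5.2)))
      (hAind hb5.1 hb2.1 (fun e => hb2.2 (e ▸ hb5.2)))
      (hA a1 hb1.1).2 (hA a2 hb2.1).2 (hAind hb1.1 hb2.1 hb12)
      h34 h35 h45
      (hB b hb).1 (Ne.symm (hAB a1 hb1.1 b hb)) (Ne.symm (hAB a2 hb2.1 b hb))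
      (hA a3 hb3.1).1 (fun e => hb1.2 (e ▸ hb3.2)) (fun e => hb2.2 (e ▸ hb3.2))
      (hA a4 hb4.1).1 (fun e => hb1.2 (e ▸ hb4.2)) (fun e => hb2.2 (e ▸ hb4.2))
      (hA a5 hb5.1).1 (fun e => hb1.2 (e ▸ hb5.2)) (fun e => hb2.2 (e ▸ hb5.2))
      (Ne.symm (hA a1 hb1.1).1) (Ne.symm (hA a2 hb2.1).1) hb12
    exact hfree.false e
  -- Step A: all of A except possibly one vertex has ≤1 non-neighbour in B
  have stepA : ∃ a₀ ∈ A, ∀ a ∈ A, a ≠ a₀ → ({b ∈ B | ¬ G.Adj a b}).encard ≤ 1 := by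
    by_cases hall : ∀ a ∈ A, ({b ∈ B | ¬ G.Adj a b}).encard ≤ 1
    · obtain ⟨a₀, ha₀⟩ := hAne
      exact ⟨a₀, ha₀, fun a ha _ => hall a ha⟩
    · push_neg at hall
      obtain ⟨a₀, ha₀, hbad₀⟩ := hall
      refine ⟨a₀, ha₀, fun a ha hne => ?_⟩
      by_contra hbad
      push_neg at hbad
      have h2a := L1A a ha hbad
      have h2a0 := L1A a₀ ha₀ hbad₀
      have hcov : B ⊆ {b ∈ B | G.Adj a b} ∪ {b ∈ B | G.Adj a₀ b} ∪
          {b ∈ B | ¬ G.Adj a b ∧ ¬ G.Adj a₀ b} := by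
        intro b hb
        by_cases h1 : G.Adj a b
        · exact Or.inl (Or.inl ⟨hb, h1⟩)
        by_cases h2 : G.Adj a₀ b
        · exact Or.inl (Or.inr ⟨hb, h2⟩)
        exact Or.inr ⟨hb, h1, h2⟩
      have h9 : (9 : ℕ∞) ≤ ({b ∈ B | G.Adj a b}).encard + ({b ∈ B | G.Adj a₀ b}).encard +
          ({b ∈ B | ¬ G.Adj a b ∧ ¬ G.Adj a₀ b}).encard :=
        le_trans hBcard (le_trans (Set.encard_mono hcov)
          (le_trans (Set.encard_union_le _ _)
            (add_le_add_left (Set.encard_union_le _ _) _)))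
      have hC3 : 2 < ({b ∈ B | ¬ G.Adj a b ∧ ¬ G.Adj a₀ b}).encard := by
        by_contra hcc
        push_neg at hcc
        have h6 : (9 : ℕ∞) ≤ 6 := le_trans h9 (le_trans
          (add_le_add (add_le_add h2a h2a0) hcc) (by norm_num))
        norm_num at h6
      obtain ⟨b1, hb1, b2, hb2, b3, hb3, d12, d13, d23⟩ := three_of_encard hC3
      obtain ⟨e⟩ := claw_embed G x1 x a a₀ b1 b2 b3
        hx1.symm (hx1A a ha) (hx1A a₀ ha₀)
        (hA a ha).2 (hA a₀ ha₀).2 (hAind ha ha₀ hne)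
        (hx1B b1 hb1.1) (hx1B b2 hb2.1) (hx1B b3 hb3.1)
        (hB b1 hb1.1).2 (hB b2 hb2.1).2 (hB b3 hb3.1).2
        hb1.2.1 hb2.2.1 hb3.2.1
        hb1.2.2 hb2.2.2 hb3.2.2
        (hBind hb1.1 hb2.1 d12) (hBind hb1.1 hb3.1 d13) (hBind hb2.1 hb3.1 d23)
        (Ne.symm (hA a ha).1) (Ne.symm (hA a₀ ha₀).1) hne
        (fun e => (hB b1 hb1.1).2 (e ▸ hx1)) (fun e => (hB b2 hb2.1).2 (e ▸ hx1))
        (fun e => (hB b3 hb3.1).2 (e ▸ hx1))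
        (Ne.symm (hB b1 hb1.1).1) (Ne.symm (hB b2 hb2.1).1) (Ne.symm (hB b3 hb3.1).1)
        (hAB a ha b1 hb1.1) (hAB a ha b2 hb2.1) (hAB a ha b3 hb3.1)
        (hAB a₀ ha₀ b1 hb1.1) (hAB a₀ ha₀ b2 hb2.1) (hAB a₀ ha₀ b3 hb3.1)
        d12 d13 d23
      exact hfree.false e
  obtain ⟨a₀, ha₀, hstepA⟩ := stepA
  -- Step B: all of B except possibly one vertex has ≤1 non-neighbour in A
  have stepB : ∃ b₀ ∈ B, ∀ b ∈ B, b ≠ b₀ → ({a ∈ A | ¬ G.Adj a b}).encard ≤ 1 := by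
    by_cases hall : ∀ b ∈ B, ({a ∈ A | ¬ G.Adj a b}).encard ≤ 1
    · obtain ⟨b₀, hb₀⟩ := hBne
      exact ⟨b₀, hb₀, fun b hb _ => hall b hb⟩
    · push_neg at hall
      obtain ⟨b₀, hb₀, hbad₀⟩ := hall
      refine ⟨b₀, hb₀, fun b hb hne => ?_⟩
      by_contra hbad
      push_neg at hbad
      have h2b := L1B b hb hbad
      have h2b0 := L1B b₀ hb₀ hbad₀
      have hcov : A ⊆ {a ∈ A | G.Adj a b} ∪ {a ∈ A | G.Adj a b₀} ∪
          {a ∈ A | ¬ G.Adj a b ∧ ¬ G.Adj a b₀} := by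
        intro a ha
        by_cases h1 : G.Adj a b
        · exact Or.inl (Or.inl ⟨ha, h1⟩)
        by_cases h2 : G.Adj a b₀
        · exact Or.inl (Or.inr ⟨ha, h2⟩)
        exact Or.inr ⟨ha, h1, h2⟩
      have h9 : (9 : ℕ∞) ≤ ({a ∈ A | G.Adj a b}).encard + ({a ∈ A | G.Adj a b₀}).encard +
          ({a ∈ A | ¬ G.Adj a b ∧ ¬ G.Adj a b₀}).encard :=
        le_trans hAcard (le_trans (Set.encard_mono hcov)
          (le_trans (Set.encard_union_le _ _)
            (add_le_add_left (Set.encard_union_le _ _) _)))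
      have hC3 : 2 < ({a ∈ A | ¬ G.Adj a b ∧ ¬ G.Adj a b₀}).encard := by
        by_contra hcc
        push_neg at hcc
        have h6 : (9 : ℕ∞) ≤ 6 := le_trans h9 (le_trans
          (add_le_add (add_le_add h2b h2b0) hcc) (by norm_num))
        norm_num at h6
      obtain ⟨a1, ha1, a2, ha2, a3, ha3, d12, d13, d23⟩ := three_of_encard hC3
      have hEx : ∃ a', a' ∈ {a ∈ A | ¬ G.Adj a b ∧ ¬ G.Adj a b₀} ∧ a' ≠ a₀ := by
        by_cases h : a1 = a₀
        · exact ⟨a2, ha2, fun e => d12 (h ▸ e ▸ rfl)⟩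
        · exact ⟨a1, ha1, h⟩
      obtain ⟨a', hC', hne'⟩ := hEx
      have hle := hstepA a' hC'.1 hne'
      have hgt : 1 < ({b' ∈ B | ¬ G.Adj a' b'}).encard := by
        apply Set.one_lt_encard_iff.mpr
        exact ⟨b, b₀, ⟨hb, hC'.2.1⟩, ⟨hb₀, hC'.2.2⟩, hne⟩
      exact absurd hle (not_le.mpr hgt)
  obtain ⟨b₀, hb₀, hstepB⟩ := stepB
  refine ⟨a₀, ha₀, b₀, hb₀, ?_, ?_⟩
  · intro a' ha'
    refine le_trans (Set.encard_mono ?_) (hstepA a' ha'.1 ha'.2)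
    intro b hbm
    exact ⟨hbm.1.1, hbm.2⟩
  · intro b' hb'
    refine le_trans (Set.encard_mono ?_) (hstepB b' hb'.1 hb'.2)
    intro a ham
    exact ⟨ham.1.1, ham.2⟩
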